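/- (Bi-Free Kac/Loeve Theorem, converse direction.) Let (A, φ) be a non-commutative probability space and let (T_1, S_1) and (T_2, S_2) be two-faced pairs in A that are bi-free, satisfy φ(T_k) = 0 = φ(S_k) for k ∈ {1,2}, are bi-free central limit distributions, and have equal second order (ℓ,r)-cumulants. Fix θ ∈ (0, π/2) and set T_3 = cos(θ)T_1 + sin(θ)T_2, S_3 = cos(θ)S_1 + sin(θ)S_2, T_4 = −sin(θ)T_1 + cos(θ)T_2, S_4 = −sin(θ)S_1 + cos(θ)S_2. Then (T_3, S_3) and (T_4, S_4) are bi-free. -/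

import Mathlib

open Finset

namespace BiFreeNL

open scoped Classical

/-- `i` and `j` lie in a common block of `P`. -/
def SameBlock {n : ℕ} (P : Finset (Finset (Fin n))) (i j : Fin n) : Prop :=
  ∃ V ∈ P, i ∈ V ∧ j ∈ V

/-- `P` is a partition of `{1, …, n}` (blocks are nonempty, and every point lies in a
unique block). -/
def IsPartition {n : ℕ} (P : Finset (Finset (Fin n))) : Prop :=
  (∀ V ∈ P, V.Nonempty) ∧ ∀ i : Fin n, ∃! V : Finset (Fin n), V ∈ P ∧ i ∈ V

/-- `P` refines `Q` : every block of `P` is contained in a block of `Q`. -/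
def Refines {n : ℕ} (P Q : Finset (Finset (Fin n))) : Prop :=
  ∀ V ∈ P, ∃ W ∈ Q, V ⊆ W

/-- The rank of `i` in the total order `≺_χ`, which reads the left indices
(`χ = true`) in increasing order followed by the right indices (`χ = false`) in
decreasing order.  This is `s_χ⁻¹`. -/
def chiRank {n : ℕ} (χ : Fin n → Bool) (i : Fin n) : ℕ :=
  if χ i = true then ((univ : Finset (Fin n)).filter fun j => χ j = true ∧ j < i).card
  else ((univ : Finset (Fin n)).filter fun j => χ j = true).card
    + ((univ : Finset (Fin n)).filter fun j => χ j = false ∧ i < j).card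

/-- `P` is a bi-non-crossing partition with respect to `χ`, i.e. `s_χ⁻¹ · P` is
non-crossing; equivalently no two distinct blocks cross with respect to `≺_χ`. -/
def IsBiNonCrossing {n : ℕ} (χ : Fin n → Bool) (P : Finset (Finset (Fin n))) : Prop :=
  IsPartition P ∧
    ∀ u₁ v₁ u₂ v₂ : Fin n,
      chiRank χ u₁ < chiRank χ v₁ → chiRank χ v₁ < chiRank χ u₂ →
        chiRank χ u₂ < chiRank χ v₂ →
        SameBlock P u₁ u₂ → SameBlock P v₁ v₂ → SameBlock P u₁ v₁

/-- The (finite) set `BNC(χ)` of bi-non-crossing partitions with respect to `χ`. -/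
noncomputable def BNC {n : ℕ} (χ : Fin n → Bool) : Finset (Finset (Finset (Fin n))) :=
  Finset.univ.filter fun P => IsBiNonCrossing χ P

/-- The maximal element `1_χ` of `BNC(χ)` : the partition with a single block. -/
def onePart (n : ℕ) : Finset (Finset (Fin n)) := {(Finset.univ : Finset (Fin n))}

/-- `μ` is the Möbius function of the lattice `BNC(χ)` : it vanishes off the
refinement order, and satisfies the two defining convolution identities. -/
def IsMoebius {n : ℕ} (χ : Fin n → Bool)
    (μ : Finset (Finset (Fin n)) → Finset (Finset (Fin n)) → ℂ) : Prop :=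
  (∀ P Q, ¬ Refines P Q → μ P Q = 0) ∧
  (∀ P Q, P ∈ BNC χ → Q ∈ BNC χ → Refines P Q →
    (∑ t ∈ (BNC χ).filter fun t => Refines P t ∧ Refines t Q, μ t Q)
      = if P = Q then 1 else 0) ∧
  (∀ P Q, P ∈ BNC χ → Q ∈ BNC χ → Refines P Q →
    (∑ t ∈ (BNC χ).filter fun t => Refines P t ∧ Refines t Q, μ P t)
      = if P = Q then 1 else 0)

/-- A family of Möbius functions, one for each `n` and `χ`. -/
def MoebiusFamily : Type :=
  ∀ n : ℕ, (Fin n → Bool) → Finset (Finset (Fin n)) → Finset (Finset (Fin n)) → ℂ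

variable {A : Type*} [Ring A] [Algebra ℂ A]

/-- `φ_π(Z_1, …, Z_n) = ∏_{V ∈ π} φ(Z_{k_1} ⋯ Z_{k_m})`, the product over the blocks
`V = {k_1 < ⋯ < k_m}` of `π` of the moments along the blocks. -/
noncomputable def phiPart {n : ℕ} (φ : A →ₗ[ℂ] ℂ) (Z : Fin n → A)
    (P : Finset (Finset (Fin n))) : ℂ :=
  ∏ V ∈ P, φ ((V.sort (· ≤ ·)).map Z).prod

/-- The `(ℓ, r)`-cumulant `κ_P(Z_1, …, Z_n) = ∑_{σ ∈ BNC(χ), σ ≤ P} φ_σ(Z) μ(σ, P)`. -/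
noncomputable def cumulant {n : ℕ} (φ : A →ₗ[ℂ] ℂ) (χ : Fin n → Bool)
    (μ : Finset (Finset (Fin n)) → Finset (Finset (Fin n)) → ℂ)
    (P : Finset (Finset (Fin n))) (Z : Fin n → A) : ℂ :=
  ∑ σ ∈ (BNC χ).filter fun σ => Refines σ P, phiPart φ Z σ * μ σ P


/-- The two-faced pairs `(T 0, S 0)` and `(T 1, S 1)` are bi-freely independent with
respect to `φ` : all mixed `(ℓ,r)`-cumulants vanish. -/
def TwoFacedBiFree {A : Type*} [Ring A] [Algebra ℂ A] (φ : A →ₗ[ℂ] ℂ)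
    (μ : MoebiusFamily) (T S : Fin 2 → A) : Prop :=
  ∀ (n : ℕ), 2 ≤ n → ∀ (χ : Fin n → Bool) (ε : Fin n → Fin 2), (∃ i j, ε i ≠ ε j) →
    cumulant φ χ (μ n χ) (onePart n)
      (fun i => if χ i = true then T (ε i) else S (ε i)) = 0

/-- `(T, S)` is a bi-free central limit distribution : all `(ℓ,r)`-cumulants of order
at least three vanish. -/
def IsBiFreeCentralLimit {A : Type*} [Ring A] [Algebra ℂ A] (φ : A →ₗ[ℂ] ℂ)
    (μ : MoebiusFamily) (T S : A) : Prop :=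
  ∀ (n : ℕ), 3 ≤ n → ∀ χ : Fin n → Bool,
    cumulant φ χ (μ n χ) (onePart n) (fun i => if χ i = true then T else S) = 0

/-- `(T 0, S 0)` and `(T 1, S 1)` have equal second order `(ℓ,r)`-cumulants. -/
def EqualSecondOrderCumulants {A : Type*} [Ring A] [Algebra ℂ A] (φ : A →ₗ[ℂ] ℂ)
    (μ : MoebiusFamily) (T S : Fin 2 → A) : Prop :=
  ∀ χ : Fin 2 → Bool,
    cumulant φ χ (μ 2 χ) (onePart 2) (fun i => if χ i = true then T 0 else S 0)
      = cumulant φ χ (μ 2 χ) (onePart 2) (fun i => if χ i = true then T 1 else S 1)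

/-! ### Auxiliary lemmas: multilinearity of the cumulants -/

section Multilinearity

lemma list_map_update_prod {n : ℕ} [DecidableEq (Fin n)] (Z : Fin n → A) (i : Fin n)
    (l : List (Fin n)) (hnd : l.Nodup) (hi : i ∈ l) :
    ∃ p q : A, ∀ x : A, (l.map (Function.update Z i x)).prod = p * x * q := by
  obtain ⟨s, t, rfl⟩ := List.append_of_mem hi
  rw [List.nodup_append] at hnd
  obtain ⟨-, hndt, hdisj⟩ := hnd
  have his : i ∉ s := fun h => hdisj i h i List.mem_cons_self rfl
  have hit : i ∉ t := (List.nodup_cons.mp hndt).1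
  refine ⟨(s.map Z).prod, (t.map Z).prod, fun x => ?_⟩
  have h1 : s.map (Function.update Z i x) = s.map Z :=
    List.map_congr_left fun a ha => Function.update_of_ne (fun h : a = i => his (h ▸ ha)) _ _
  have h2 : t.map (Function.update Z i x) = t.map Z :=
    List.map_congr_left fun a ha => Function.update_of_ne (fun h : a = i => hit (h ▸ ha)) _ _
  rw [List.map_append, List.prod_append, List.map_cons, List.prod_cons,
    Function.update_self, h1, h2, mul_assoc]

lemma phiPart_update {n : ℕ} [DecidableEq (Fin n)] (φ : A →ₗ[ℂ] ℂ)
    {σ : Finset (Finset (Fin n))} (hσ : IsPartition σ) (Z : Fin n → A) (i : Fin n) :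
    ∃ (p q : A) (C : ℂ), ∀ x : A,
      phiPart φ (Function.update Z i x) σ = φ (p * x * q) * C := by
  obtain ⟨V₀, ⟨hV₀, hiV₀⟩, huniq⟩ := hσ.2 i
  obtain ⟨p, q, hpq⟩ := list_map_update_prod Z i (V₀.sort (· ≤ ·))
    (Finset.sort_nodup _ _) ((Finset.mem_sort _).mpr hiV₀)
  refine ⟨p, q, ∏ V ∈ σ.erase V₀, φ ((V.sort (· ≤ ·)).map Z).prod, fun x => ?_⟩
  have hVne : ∀ V ∈ σ.erase V₀, i ∉ V := fun V hV hiV =>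
    (Finset.mem_erase.mp hV).1 (huniq V ⟨Finset.mem_of_mem_erase hV, hiV⟩)
  unfold phiPart
  rw [← Finset.mul_prod_erase σ _ hV₀, hpq]
  refine congrArg _ (Finset.prod_congr rfl fun V hV => ?_)
  refine congrArg _ (congrArg _ ?_)
  exact List.map_congr_left fun a ha =>
    Function.update_of_ne (fun h : a = i => hVne V hV (h ▸ (Finset.mem_sort _).mp ha)) _ _

lemma mem_cumulant_filter_isPartition {n : ℕ} {χ : Fin n → Bool}
    {P σ : Finset (Finset (Fin n))}
    (hσ : σ ∈ (BNC χ).filter fun σ => Refines σ P) : IsPartition σ := by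
  have := (Finset.mem_filter.mp hσ).1
  exact ((Finset.mem_filter.mp this).2).1

lemma cumulant_update_add {n : ℕ} [DecidableEq (Fin n)] (φ : A →ₗ[ℂ] ℂ)
    (χ : Fin n → Bool) (μ : Finset (Finset (Fin n)) → Finset (Finset (Fin n)) → ℂ)
    (P : Finset (Finset (Fin n))) (Z : Fin n → A) (i : Fin n) (x y : A) :
    cumulant φ χ μ P (Function.update Z i (x + y))
      = cumulant φ χ μ P (Function.update Z i x)
        + cumulant φ χ μ P (Function.update Z i y) := by
  unfold cumulant
  rw [← Finset.sum_add_distrib]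
  refine Finset.sum_congr rfl fun σ hσ => ?_
  obtain ⟨p, q, C, h⟩ := phiPart_update φ (mem_cumulant_filter_isPartition hσ) Z i
  rw [h, h, h, show p * (x + y) * q = p * x * q + p * y * q by rw [mul_add, add_mul], map_add]
  ring

lemma cumulant_update_smul {n : ℕ} [DecidableEq (Fin n)] (φ : A →ₗ[ℂ] ℂ)
    (χ : Fin n → Bool) (μ : Finset (Finset (Fin n)) → Finset (Finset (Fin n)) → ℂ)
    (P : Finset (Finset (Fin n))) (Z : Fin n → A) (i : Fin n) (c : ℂ) (x : A) :
    cumulant φ χ μ P (Function.update Z i (c • x))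
      = c • cumulant φ χ μ P (Function.update Z i x) := by
  unfold cumulant
  rw [Finset.smul_sum]
  refine Finset.sum_congr rfl fun σ hσ => ?_
  obtain ⟨p, q, C, h⟩ := phiPart_update φ (mem_cumulant_filter_isPartition hσ) Z i
  rw [h, h, show p * (c • x) * q = c • (p * x * q) by
      rw [mul_smul_comm, smul_mul_assoc], map_smul]
  simp [smul_eq_mul]; ring

/-- The cumulant as a multilinear map in the entries. -/
noncomputable def cumulantML {n : ℕ} (φ : A →ₗ[ℂ] ℂ) (χ : Fin n → Bool)
    (μ : Finset (Finset (Fin n)) → Finset (Finset (Fin n)) → ℂ)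
    (P : Finset (Finset (Fin n))) : MultilinearMap ℂ (fun _ : Fin n => A) ℂ where
  toFun := cumulant φ χ μ P
  map_update_add' Z i x y := cumulant_update_add φ χ μ P Z i x y
  map_update_smul' Z i c x := cumulant_update_smul φ χ μ P Z i c x

@[simp] lemma cumulantML_apply {n : ℕ} (φ : A →ₗ[ℂ] ℂ) (χ : Fin n → Bool)
    (μ : Finset (Finset (Fin n)) → Finset (Finset (Fin n)) → ℂ)
    (P : Finset (Finset (Fin n))) (Z : Fin n → A) :
    cumulantML φ χ μ P Z = cumulant φ χ μ P Z := rfl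

lemma cumulant_expand {n : ℕ} (φ : A →ₗ[ℂ] ℂ) (χ : Fin n → Bool)
    (μ : Finset (Finset (Fin n)) → Finset (Finset (Fin n)) → ℂ)
    (P : Finset (Finset (Fin n))) (coef : Fin n → Fin 2 → ℂ) (W : Fin n → Fin 2 → A) :
    cumulant φ χ μ P (fun i => ∑ k : Fin 2, coef i k • W i k)
      = ∑ r : Fin n → Fin 2, (∏ i, coef i (r i)) * cumulant φ χ μ P (fun i => W i (r i)) := by
  classical
  have h1 : cumulant φ χ μ P (fun i => ∑ k : Fin 2, coef i k • W i k)
      = ∑ r : Fin n → Fin 2, cumulantML φ χ μ P (fun i => coef i (r i) • W i (r i)) :=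
    (cumulantML φ χ μ P).map_sum (fun i k => coef i k • W i k)
  rw [h1]
  refine Finset.sum_congr rfl fun r _ => ?_
  rw [(cumulantML φ χ μ P).map_smul_univ (fun i => coef i (r i)) (fun i => W i (r i))]
  simp [smul_eq_mul]

end Multilinearity

end BiFreeNL

open BiFreeNL in
/-- **Bi-Free Kac/Loeve Theorem, converse direction.** -/
theorem kac_loeve_converse
    {A : Type*} [Ring A] [Algebra ℂ A]
    (φ : A →ₗ[ℂ] ℂ) (hφ : φ 1 = 1)
    (μ : MoebiusFamily) (hμ : ∀ (n : ℕ) (χ : Fin n → Bool), IsMoebius χ (μ n χ))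
    (T S : Fin 2 → A)
    (hcent : ∀ k, φ (T k) = 0 ∧ φ (S k) = 0)
    (hbf : TwoFacedBiFree φ μ T S)
    (hclt : IsBiFreeCentralLimit φ μ (T 0) (S 0) ∧ IsBiFreeCentralLimit φ μ (T 1) (S 1))
    (heq : EqualSecondOrderCumulants φ μ T S)
    (θ : ℝ) (hθ : θ ∈ Set.Ioo 0 (Real.pi / 2)) :
    TwoFacedBiFree φ μ
      ![(Real.cos θ : ℂ) • T 0 + (Real.sin θ : ℂ) • T 1,
        (-(Real.sin θ : ℂ)) • T 0 + (Real.cos θ : ℂ) • T 1]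
      ![(Real.cos θ : ℂ) • S 0 + (Real.sin θ : ℂ) • S 1,
        (-(Real.sin θ : ℂ)) • S 0 + (Real.cos θ : ℂ) • S 1] := by
  classical
  intro n hn χ ε hε
  have fin2 : ∀ x : Fin 2, x = 0 ∨ x = 1 := by decide
  set c : ℂ := (Real.cos θ : ℂ) with hc
  set s : ℂ := (Real.sin θ : ℂ) with hs
  set coef : Fin n → Fin 2 → ℂ := fun i k =>
    if ε i = 0 then (if k = 0 then c else s) else (if k = 0 then -s else c) with hcoef
  set W : Fin n → Fin 2 → A := fun i k => if χ i = true then T k else S k with hWdef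
  have hZ : (fun i => if χ i = true then
        (![c • T 0 + s • T 1, (-s) • T 0 + c • T 1]) (ε i)
        else (![c • S 0 + s • S 1, (-s) • S 0 + c • S 1]) (ε i))
      = fun i => ∑ k : Fin 2, coef i k • W i k := by
    funext i
    rw [Fin.sum_univ_two]
    rcases fin2 (ε i) with h | h <;> rw [h] <;> by_cases hχ : χ i = true <;>
      simp [hcoef, hWdef, hχ, h, show ((1 : Fin 2) ≠ 0) from by decide]
  rw [hZ, cumulant_expand]
  -- the "pure" cumulants
  have hW : ∀ r : Fin n → Fin 2, (fun i => W i (r i))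
      = fun i => if χ i = true then T (r i) else S (r i) := fun r => rfl
  rcases Nat.lt_or_ge n 3 with h3 | h3
  · -- n = 2
    have hn2 : n = 2 := by omega
    subst hn2
    have hne : ε 0 ≠ ε 1 := by
      obtain ⟨i, j, hij⟩ := hε
      fin_cases i <;> fin_cases j <;>
        first
          | exact absurd rfl hij
          | exact hij
          | exact fun h => hij h.symm
    have hpair : ∑ r : Fin 2 → Fin 2,
          (∏ i, coef i (r i)) * cumulant φ χ (μ 2 χ) (onePart 2) (fun i => W i (r i))
        = ∑ r ∈ ({(fun _ => 0), (fun _ => 1)} : Finset (Fin 2 → Fin 2)),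
          (∏ i, coef i (r i)) * cumulant φ χ (μ 2 χ) (onePart 2) (fun i => W i (r i)) := by
      refine (Finset.sum_subset (Finset.subset_univ _) fun r _ hr => ?_).symm
      rw [Finset.mem_insert, Finset.mem_singleton] at hr
      push_neg at hr
      have hrnc : ∃ i j, r i ≠ r j := by
        by_contra hcon
        push_neg at hcon
        rcases fin2 (r 0) with h | h
        · exact hr.1 (funext fun i => (hcon i 0).trans h)
        · exact hr.2 (funext fun i => (hcon i 0).trans h)
      rw [hW r, hbf 2 (by norm_num) χ r hrnc, mul_zero]
    rw [hpair, Finset.sum_pair (by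
      intro h
      exact absurd (congrFun h 0) (by decide))]
    have hK := heq χ
    have e0 : (fun i : Fin 2 => W i ((fun _ => (0 : Fin 2)) i))
        = fun i => if χ i = true then T 0 else S 0 := rfl
    have e1 : (fun i : Fin 2 => W i ((fun _ => (1 : Fin 2)) i))
        = fun i => if χ i = true then T 1 else S 1 := rfl
    rw [e0, e1, ← hK, Fin.prod_univ_two, Fin.prod_univ_two]
    rcases fin2 (ε 0) with h0 | h0
    · have h1 : ε 1 = 1 := by
        rcases fin2 (ε 1) with h | h
        · exact absurd (h0.trans h.symm) hne
        · exact h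
      simp only [hcoef, h0, h1, show ((1 : Fin 2) ≠ 0) from by decide, if_true, if_false, ite_true, ite_false, if_pos rfl, if_neg (show ((1 : Fin 2) ≠ 0) from by decide)]
      ring
    · have h1 : ε 1 = 0 := by
        rcases fin2 (ε 1) with h | h
        · exact h
        · exact absurd (h0.trans h.symm) hne
      simp only [hcoef, h0, h1, show ((1 : Fin 2) ≠ 0) from by decide, if_true, if_false, ite_true, ite_false, if_pos rfl, if_neg (show ((1 : Fin 2) ≠ 0) from by decide)]
      ring
  · -- n ≥ 3 : every pure cumulant of order n vanishes
    refine Finset.sum_eq_zero fun r _ => ?_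
    rw [hW r]
    by_cases hrnc : ∃ i j, r i ≠ r j
    · rw [hbf n hn χ r hrnc, mul_zero]
    · push_neg at hrnc
      have h0 : (0 : ℕ) < n := by omega
      set i₀ : Fin n := ⟨0, h0⟩
      have : (fun i => if χ i = true then T (r i) else S (r i))
          = fun i => if χ i = true then T (r i₀) else S (r i₀) := by
        funext i; rw [hrnc i i₀]
      rw [this]
      rcases fin2 (r i₀) with h | h <;> rw [h]
      · rw [hclt.1 n h3 χ, mul_zero]
      · rw [hclt.2 n h3 χ, mul_zero]
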